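/- Let W : ℝ² → ℝ be continuous, Λ-periodic (W(x+w) = W(x) for all x ∈ ℝ², w ∈ Λ) and odd (W(−x) = −W(x)). Let ξ ∈ ℝ² and let φ₁ : ℝ² → ℂ be continuous and ξ-quasiperiodic, and set φ₂(x) := conj(φ₁(−x)). Then ∫_𝕃 conj(φ₂(x))·W(x)·φ₁(x) dx = 0, ∫_𝕃 conj(φ₁(x))·W(x)·φ₂(x) dx = 0, and ∫_𝕃 W(x)·|φ₁(x)|² dx = −∫_𝕃 W(x)·|φ₂(x)|² dx. -/
import Mathlib


open MeasureTheory

/-- The Euclidean inner product on `ℝ²`. -/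
def dot2 (x y : ℝ × ℝ) : ℝ := x.1 * y.1 + x.2 * y.2

/-- `f` is `ξ`-quasiperiodic with respect to the lattice `ℤv₁ + ℤv₂`. -/
def Quasiperiodic (v₁ v₂ ξ : ℝ × ℝ) (f : ℝ × ℝ → ℂ) : Prop :=
  ∀ (x : ℝ × ℝ) (m n : ℤ),
    f (x + ((m : ℝ) • v₁ + (n : ℝ) • v₂)) =
      Complex.exp (Complex.I * (dot2 ξ ((m : ℝ) • v₁ + (n : ℝ) • v₂) : ℂ)) * f x

/-- The fundamental cell `𝕃 = {s₁v₁ + s₂v₂ : s₁, s₂ ∈ [0,1)}`. -/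
def cell (v₁ v₂ : ℝ × ℝ) : Set (ℝ × ℝ) :=
  {x | ∃ s₁ s₂ : ℝ, s₁ ∈ Set.Ico (0 : ℝ) 1 ∧ s₂ ∈ Set.Ico (0 : ℝ) 1 ∧
    x = s₁ • v₁ + s₂ • v₂}

/-- Key lemma: for a `Λ`-periodic function, the integral of `f (-x)` over the
fundamental cell equals the integral of `f x`. -/
theorem integral_cell_neg_eq {E : Type*} [NormedAddCommGroup E] [NormedSpace ℝ E]
    (v₁ v₂ : ℝ × ℝ) (hindep : LinearIndependent ℝ ![v₁, v₂])
    (f : ℝ × ℝ → E)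
    (hper : ∀ (x : ℝ × ℝ) (m n : ℤ), f (x + ((m : ℝ) • v₁ + (n : ℝ) • v₂)) = f x) :
    (∫ x in cell v₁ v₂, f (-x)) = ∫ x in cell v₁ v₂, f x := by
  have hcard : Fintype.card (Fin 2) = Module.finrank ℝ (ℝ × ℝ) := by simp
  set b := basisOfLinearIndependentOfCardEqFinrank hindep hcard with hbdef
  have hb : ⇑b = ![v₁, v₂] := coe_basisOfLinearIndependentOfCardEqFinrank hindep hcard
  -- the cell is the fundamental domain of `b`
  have hcell : cell v₁ v₂ = ZSpan.fundamentalDomain b := by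
    ext x
    constructor
    · rintro ⟨s₁, s₂, h₁, h₂, rfl⟩
      intro i
      have hx : s₁ • v₁ + s₂ • v₂ = s₁ • b 0 + s₂ • b 1 := by rw [hb]; simp
      rw [hx]
      fin_cases i <;>
        simp [_root_.map_add, _root_.map_smul, b.repr_self, Finsupp.single_apply,
          h₁.1, h₁.2, h₂.1, h₂.2]
    · intro hx
      refine ⟨b.repr x 0, b.repr x 1, hx 0, hx 1, ?_⟩
      have := b.sum_repr x
      rw [Fin.sum_univ_two] at this
      conv_lhs => rw [← this]
      rw [hb]
      simp
  -- the lattice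
  set G := (Submodule.span ℤ (Set.range ⇑b)).toAddSubgroup with hGdef
  have hFD : IsAddFundamentalDomain G (ZSpan.fundamentalDomain b) volume :=
    ZSpan.isAddFundamentalDomain' b volume
  have hcount : Countable G :=
    inferInstanceAs (Countable (Submodule.span ℤ (Set.range ⇑b)))
  -- invariance of f under the lattice
  have hrange : Set.range ⇑b = {v₁, v₂} := by
    rw [hb]
    ext y
    simp only [Matrix.range_cons, Matrix.range_empty, Set.union_empty, Set.union_singleton,
      Set.mem_insert_iff, Set.mem_singleton_iff]
    tauto
  have hper' : ∀ (x : ℝ × ℝ) (m n : ℤ), f (x + (m • v₁ + n • v₂)) = f x := by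
    intro x m n
    have := hper x m n
    rwa [Int.cast_smul_eq_zsmul, Int.cast_smul_eq_zsmul] at this
  have hinv : ∀ (g : G) (x : ℝ × ℝ), f (g +ᵥ x) = f x := by
    rintro ⟨g, hg⟩ x
    rw [hGdef] at hg
    have hg' : g ∈ Submodule.span ℤ (Set.range ⇑b) := hg
    rw [hrange, Submodule.mem_span_pair] at hg'
    obtain ⟨m, n, rfl⟩ := hg'
    have : (⟨m • v₁ + n • v₂, hg⟩ : G) +ᵥ x = x + (m • v₁ + n • v₂) := by
      show (m • v₁ + n • v₂) + x = x + (m • v₁ + n • v₂)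
      abel
    rw [this, hper']
  -- the negated cell is also a fundamental domain
  have hnegFD : IsAddFundamentalDomain G ((Equiv.neg (ℝ × ℝ)) '' ZSpan.fundamentalDomain b)
      volume := by
    refine hFD.image_of_equiv (Equiv.neg (ℝ × ℝ))
      (Measure.measurePreserving_neg _).quasiMeasurePreserving (Equiv.neg G) ?_
    intro g x
    show -((-g : G) +ᵥ x) = g +ᵥ (-x)
    show -(((-g : G) : ℝ × ℝ) + x) = (g : ℝ × ℝ) + (-x)
    rw [AddSubgroup.coe_neg]
    abel
  -- change of variables
  have hchange : (∫ x in cell v₁ v₂, f (-x)) =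
      ∫ x in (Equiv.neg (ℝ × ℝ)) '' ZSpan.fundamentalDomain b, f x := by
    rw [hcell]
    have himg : (Equiv.neg (ℝ × ℝ)) '' ZSpan.fundamentalDomain b =
        Neg.neg '' ZSpan.fundamentalDomain b := rfl
    rw [himg,
      (Measure.measurePreserving_neg (volume : Measure (ℝ × ℝ))).setIntegral_image_emb
        measurableEmbedding_neg f _]
  rw [hchange, hcell]
  exact hnegFD.setIntegral_eq hFD hinv

/-- Lemma 1h of the paper: for an odd periodic `W` and `φ₂(x) = conj(φ₁(−x))`, the
off-diagonal matrix elements of `W` vanish and the diagonal ones are opposite. -/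
theorem stmt5 (v₁ v₂ : ℝ × ℝ) (hindep : LinearIndependent ℝ ![v₁, v₂])
    (W : ℝ × ℝ → ℝ) (hWcont : Continuous W)
    (hWper : ∀ (x : ℝ × ℝ) (m n : ℤ), W (x + ((m : ℝ) • v₁ + (n : ℝ) • v₂)) = W x)
    (hWodd : ∀ x, W (-x) = -W x)
    (ξ : ℝ × ℝ) (φ₁ : ℝ × ℝ → ℂ) (hφ₁cont : Continuous φ₁)
    (hφ₁qp : Quasiperiodic v₁ v₂ ξ φ₁)
    (φ₂ : ℝ × ℝ → ℂ) (hφ₂ : ∀ x, φ₂ x = (starRingEnd ℂ) (φ₁ (-x))) :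
    (∫ x in cell v₁ v₂, (starRingEnd ℂ) (φ₂ x) * (W x : ℂ) * φ₁ x) = 0 ∧
    (∫ x in cell v₁ v₂, (starRingEnd ℂ) (φ₁ x) * (W x : ℂ) * φ₂ x) = 0 ∧
    (∫ x in cell v₁ v₂, W x * Complex.normSq (φ₁ x)) =
      -∫ x in cell v₁ v₂, W x * Complex.normSq (φ₂ x) := by
  -- auxiliary facts
  have hnegx : ∀ (x : ℝ × ℝ) (m n : ℤ),
      -(x + ((m : ℝ) • v₁ + (n : ℝ) • v₂)) =
        (-x) + ((((-m : ℤ) : ℝ)) • v₁ + (((-n : ℤ) : ℝ)) • v₂) := by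
    intro x m n
    push_cast
    rw [neg_smul, neg_smul]
    abel
  have hdot : ∀ (m n : ℤ),
      dot2 ξ ((((-m : ℤ) : ℝ)) • v₁ + (((-n : ℤ) : ℝ)) • v₂) =
        -dot2 ξ ((m : ℝ) • v₁ + (n : ℝ) • v₂) := by
    intro m n
    simp only [dot2, Prod.fst_add, Prod.snd_add, Prod.smul_fst, Prod.smul_snd, smul_eq_mul]
    push_cast
    ring
  have hexp : ∀ (m n : ℤ),
      Complex.exp (Complex.I *
          (dot2 ξ ((((-m : ℤ) : ℝ)) • v₁ + (((-n : ℤ) : ℝ)) • v₂) : ℂ)) *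
        Complex.exp (Complex.I * (dot2 ξ ((m : ℝ) • v₁ + (n : ℝ) • v₂) : ℂ)) = 1 := by
    intro m n
    rw [hdot, ← Complex.exp_add]
    push_cast
    rw [show Complex.I * (-(dot2 ξ ((m : ℝ) • v₁ + (n : ℝ) • v₂) : ℂ)) +
        Complex.I * (dot2 ξ ((m : ℝ) • v₁ + (n : ℝ) • v₂) : ℂ) = 0 by ring,
      Complex.exp_zero]
  -- first integrand
  set F : ℝ × ℝ → ℂ := fun x => φ₁ (-x) * (W x : ℂ) * φ₁ x with hF
  have hFint : ∀ x, (starRingEnd ℂ) (φ₂ x) * (W x : ℂ) * φ₁ x = F x := by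
    intro x
    rw [hφ₂]
    simp [hF]
  have hFper : ∀ (x : ℝ × ℝ) (m n : ℤ), F (x + ((m : ℝ) • v₁ + (n : ℝ) • v₂)) = F x := by
    intro x m n
    simp only [hF]
    rw [hnegx x m n, hφ₁qp, hWper, hφ₁qp x m n]
    have := hexp m n
    push_cast at this ⊢
    linear_combination (φ₁ (-x) * (W x : ℂ) * φ₁ x) * this
  have hFodd : ∀ x, F (-x) = -F x := by
    intro x
    simp only [hF, neg_neg, hWodd]
    push_cast
    ring
  have hFzero : (∫ x in cell v₁ v₂, F x) = 0 := by
    have h1 : (∫ x in cell v₁ v₂, F (-x)) = ∫ x in cell v₁ v₂, F x :=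
      integral_cell_neg_eq v₁ v₂ hindep F hFper
    have h2 : (∫ x in cell v₁ v₂, F (-x)) = -∫ x in cell v₁ v₂, F x := by
      simp_rw [hFodd]
      exact integral_neg _
    have h3 : (∫ x in cell v₁ v₂, F x) = -∫ x in cell v₁ v₂, F x := h1.symm.trans h2
    have h4 : (2 : ℂ) * ∫ x in cell v₁ v₂, F x = 0 := by linear_combination h3
    have := mul_eq_zero.mp h4
    simpa using this
  refine ⟨?_, ?_, ?_⟩
  · rw [show (∫ x in cell v₁ v₂, (starRingEnd ℂ) (φ₂ x) * (W x : ℂ) * φ₁ x) =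
        ∫ x in cell v₁ v₂, F x from by simp_rw [hFint]]
    exact hFzero
  · -- second integrand is the conjugate of the first
    have hconj : ∀ x, (starRingEnd ℂ) (φ₁ x) * (W x : ℂ) * φ₂ x =
        (starRingEnd ℂ) (F x) := by
      intro x
      rw [hφ₂]
      simp [hF, mul_comm, mul_assoc, mul_left_comm]
    calc (∫ x in cell v₁ v₂, (starRingEnd ℂ) (φ₁ x) * (W x : ℂ) * φ₂ x)
        = ∫ x in cell v₁ v₂, (starRingEnd ℂ) (F x) := by simp_rw [hconj]
      _ = (starRingEnd ℂ) (∫ x in cell v₁ v₂, F x) := integral_conj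
      _ = 0 := by rw [hFzero]; simp
  · -- third part
    set H : ℝ × ℝ → ℝ := fun x => W x * Complex.normSq (φ₁ x) with hH
    have hHper : ∀ (x : ℝ × ℝ) (m n : ℤ),
        H (x + ((m : ℝ) • v₁ + (n : ℝ) • v₂)) = H x := by
      intro x m n
      simp only [hH]
      rw [hWper, hφ₁qp x m n]
      have : Complex.normSq (Complex.exp (Complex.I *
          (dot2 ξ ((m : ℝ) • v₁ + (n : ℝ) • v₂) : ℂ))) = 1 := by
        rw [Complex.normSq_eq_norm_sq, Complex.norm_exp]
        simp
      rw [Complex.normSq_mul, this, one_mul]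
    have hHodd : ∀ x, H (-x) = -(W x * Complex.normSq (φ₂ x)) := by
      intro x
      simp only [hH, hWodd, hφ₂, Complex.normSq_conj]
      ring
    have h1 : (∫ x in cell v₁ v₂, H (-x)) = ∫ x in cell v₁ v₂, H x :=
      integral_cell_neg_eq v₁ v₂ hindep H hHper
    have h2 : (∫ x in cell v₁ v₂, H (-x)) =
        -∫ x in cell v₁ v₂, W x * Complex.normSq (φ₂ x) := by
      simp_rw [hHodd]
      exact integral_neg _
    rw [show (∫ x in cell v₁ v₂, W x * Complex.normSq (φ₁ x)) =
        ∫ x in cell v₁ v₂, H x from rfl, ← h1, h2]
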